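/- (Optimal value function of discrete-time exploratory MV) Define V_t(x) for t = T, T-1, …, 0 by the backward recursion V_T(x) = (x-w)² - (w-b)² and V_t(x) = min over probability densities π of { E[V_{t+1}(r_f x + r U)] + λ ∫ π(u) ln π(u) du }, where r has mean a, variance σ² > 0, and U ~ π is independent of r. Then for all 0 ≤ t ≤ T, V_t(x) = (σ²r_f²/(a²+σ²))^{T-t} (x - r_f^{-(T-t)} w)² + (λ/2)(T-t) ln((a²+σ²)/(πλ)) + (λ/2) Σ_{i=t+1}^{T} (T-i) ln(σ²r_f²/(a²+σ²)) - (w-b)². -/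

import Mathlib

open MeasureTheory Real

/-- A probability density on ℝ. -/
def IsDensity (p : ℝ → ℝ) : Prop := (∀ u, 0 ≤ p u) ∧ (∫ u, p u) = 1

/-- One step of the exploratory MV Bellman operator:
`E[Vnext(r_f x + r U)] + λ ∫ p ln p` with `U ~ p` independent of `r`. -/
noncomputable def stepVal {Ω : Type*} [MeasurableSpace Ω] (μ : Measure Ω)
    (r : Ω → ℝ) (rf lam : ℝ) (Vnext : ℝ → ℝ) (x : ℝ) (p : ℝ → ℝ) : ℝ :=
  (∫ ω, ∫ u, Vnext (rf * x + r ω * u) * p u ∂volume ∂μ) +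
    lam * ∫ u, p u * Real.log (p u)


lemma myint_sq_exp {c : ℝ} (hc : 0 < c) :
    Integrable (fun x : ℝ => x ^ 2 * Real.exp (-c * x ^ 2)) := by
  have h := integrable_rpow_mul_exp_neg_mul_sq hc (s := 2) (by norm_num)
  refine h.congr (Filter.Eventually.of_forall fun x => ?_)
  simp only []
  rw [show ((2:ℝ)) = ((2:ℕ):ℝ) by norm_num, Real.rpow_natCast]

lemma myintegral_x_exp (c : ℝ) : ∫ x : ℝ, x * Real.exp (-c * x ^ 2) = 0 := by
  have h := MeasureTheory.integral_neg_eq_self (fun x : ℝ => x * Real.exp (-c * x ^ 2)) volume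
  simp only [neg_sq, neg_mul] at h
  rw [integral_neg] at h
  simp only [neg_mul]
  linarith [h]

lemma myintegral_sq_exp {c : ℝ} (hc : 0 < c) :
    ∫ x : ℝ, x ^ 2 * Real.exp (-c * x ^ 2) = (1 / (2 * c)) * Real.sqrt (π / c) := by
  have hu : ∀ x : ℝ, HasDerivAt (fun y : ℝ => y) 1 x := fun x => hasDerivAt_id x
  have hv : ∀ x : ℝ, HasDerivAt (fun y : ℝ => -(1/(2*c)) * Real.exp (-c * y ^ 2))
      (x * Real.exp (-c * x ^ 2)) x := by
    intro x
    have h1 : HasDerivAt (fun y : ℝ => -c * y ^ 2) (-c * (2 * x)) x := by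
      simpa using ((hasDerivAt_pow 2 x).const_mul (-c))
    have := (h1.exp).const_mul (-(1/(2*c)))
    refine this.congr_deriv ?_
    rw [show -(1/(2*c)) * (Real.exp (-c * x ^ 2) * (-c * (2 * x))) = (c/c) * (x * Real.exp (-c*x^2)) by ring, div_self hc.ne', one_mul]
  have huv' : Integrable ((fun y : ℝ => y) * fun x => x * Real.exp (-c * x ^ 2)) := by
    refine (myint_sq_exp hc).congr (Filter.Eventually.of_forall fun x => ?_)
    simp [Pi.mul_apply]; ring
  have hu'v : Integrable ((fun _ : ℝ => (1:ℝ)) * fun y : ℝ => -(1/(2*c)) * Real.exp (-c * y ^ 2)) := by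
    refine (((integrable_exp_neg_mul_sq hc).const_mul (-(1/(2*c))))).congr
      (Filter.Eventually.of_forall fun x => ?_)
    simp [Pi.mul_apply]
  have huv : Integrable ((fun y : ℝ => y) * fun y : ℝ => -(1/(2*c)) * Real.exp (-c * y ^ 2)) := by
    refine ((integrable_mul_exp_neg_mul_sq hc).const_mul (-(1/(2*c)))).congr
      (Filter.Eventually.of_forall fun x => ?_)
    simp [Pi.mul_apply]; ring
  have key := integral_mul_deriv_eq_deriv_mul_of_integrable (fun x _ => hu x) (fun x _ => hv x) huv' hu'v huv
  rw [show (∫ x : ℝ, x ^ 2 * Real.exp (-c * x ^ 2))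
      = ∫ x : ℝ, x * (x * Real.exp (-c * x ^ 2)) by congr 1; funext x; ring, key]
  rw [show (∫ x : ℝ, (1:ℝ) * (-(1/(2*c)) * Real.exp (-c * x ^ 2)))
      = -(1/(2*c)) * ∫ x : ℝ, Real.exp (-c * x ^ 2) by
    rw [← integral_const_mul]; congr 1; funext x; ring]
  rw [integral_gaussian]
  ring


noncomputable def gp (m v : ℝ) (u : ℝ) : ℝ :=
  (Real.sqrt (2*π*v))⁻¹ * Real.exp (-(1/(2*v)) * (u-m)^2)

variable {m v : ℝ}

lemma gp_pos (hv : 0 < v) (u : ℝ) : 0 < gp m v u := by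
  have : 0 < Real.sqrt (2*π*v) := Real.sqrt_pos.mpr (by positivity)
  unfold gp; positivity

lemma sqrt_2piv_pos (hv : 0 < v) : 0 < Real.sqrt (2*π*v) :=
  Real.sqrt_pos.mpr (by positivity)

lemma c_pos (hv : 0 < v) : 0 < 1/(2*v) := by positivity

lemma gp_integrable (hv : 0 < v) : Integrable (gp m v) := by
  exact (((integrable_exp_neg_mul_sq (c_pos hv)).comp_sub_right m).const_mul _)

lemma gp_integral (hv : 0 < v) : ∫ u, gp m v u = 1 := by
  unfold gp
  rw [integral_const_mul]
  rw [integral_sub_right_eq_self (μ := volume) (fun u => Real.exp (-(1/(2*v)) * u^2)) m]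
  rw [integral_gaussian]
  rw [show π / (1/(2*v)) = 2*π*v by field_simp]
  rw [inv_mul_cancel₀ (ne_of_gt (sqrt_2piv_pos hv))]

lemma gp_m1_integrable (hv : 0 < v) : Integrable (fun u => (u - m) * gp m v u) := by
  have h := ((integrable_mul_exp_neg_mul_sq (c_pos hv)).comp_sub_right m).const_mul
    ((Real.sqrt (2*π*v))⁻¹)
  refine h.congr (Filter.Eventually.of_forall fun u => ?_)
  unfold gp; simp only []; ring

lemma gp_m2_integrable (hv : 0 < v) : Integrable (fun u => (u - m)^2 * gp m v u) := by
  have h := ((myint_sq_exp (c_pos hv)).comp_sub_right m).const_mul ((Real.sqrt (2*π*v))⁻¹)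
  refine h.congr (Filter.Eventually.of_forall fun u => ?_)
  unfold gp; simp only []; ring

lemma gp_m1_integral (hv : 0 < v) : ∫ u, (u - m) * gp m v u = 0 := by
  unfold gp
  rw [show (fun u => (u-m) * ((Real.sqrt (2*π*v))⁻¹ * Real.exp (-(1/(2*v)) * (u-m)^2)))
    = fun u => (Real.sqrt (2*π*v))⁻¹ * ((u-m) * Real.exp (-(1/(2*v)) * (u-m)^2)) by
      funext u; ring]
  rw [integral_const_mul]
  rw [integral_sub_right_eq_self (μ := volume)
    (fun u => u * Real.exp (-(1/(2*v)) * u^2)) m]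
  rw [myintegral_x_exp]
  ring

lemma gp_m2_integral (hv : 0 < v) : ∫ u, (u - m)^2 * gp m v u = v := by
  unfold gp
  rw [show (fun u => (u-m)^2 * ((Real.sqrt (2*π*v))⁻¹ * Real.exp (-(1/(2*v)) * (u-m)^2)))
    = fun u => (Real.sqrt (2*π*v))⁻¹ * ((u-m)^2 * Real.exp (-(1/(2*v)) * (u-m)^2)) by
      funext u; ring]
  rw [integral_const_mul]
  rw [integral_sub_right_eq_self (μ := volume)
    (fun u => u^2 * Real.exp (-(1/(2*v)) * u^2)) m]
  rw [myintegral_sq_exp (c_pos hv)]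
  rw [show π / (1/(2*v)) = 2*π*v by field_simp]
  rw [show (1:ℝ) / (2 * (1/(2*v))) = v by field_simp]
  rw [show (Real.sqrt (2*π*v))⁻¹ * (v * Real.sqrt (2*π*v))
      = v * ((Real.sqrt (2*π*v))⁻¹ * Real.sqrt (2*π*v)) by ring,
    inv_mul_cancel₀ (ne_of_gt (sqrt_2piv_pos hv)), mul_one]

lemma gp_log (hv : 0 < v) (u : ℝ) :
    Real.log (gp m v u) = -(Real.log (2*π*v))/2 - (1/(2*v)) * (u-m)^2 := by
  unfold gp
  rw [Real.log_mul (inv_ne_zero (ne_of_gt (sqrt_2piv_pos hv))) (ne_of_gt (Real.exp_pos _)),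
    Real.log_inv, Real.log_exp, Real.log_sqrt (by positivity)]
  ring

lemma gp_ent_integrable (hv : 0 < v) :
    Integrable (fun u => gp m v u * Real.log (gp m v u)) := by
  have h : (fun u => gp m v u * Real.log (gp m v u))
      = fun u => (-(Real.log (2*π*v))/2) * gp m v u - (1/(2*v)) * ((u-m)^2 * gp m v u) := by
    funext u; rw [gp_log hv]; ring
  rw [h]
  exact ((gp_integrable hv).const_mul _).sub ((gp_m2_integrable hv).const_mul _)

lemma gp_ent_integral (hv : 0 < v) :
    ∫ u, gp m v u * Real.log (gp m v u) = -(Real.log (2*π*v))/2 - 1/2 := by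
  have h : (fun u => gp m v u * Real.log (gp m v u))
      = fun u => (-(Real.log (2*π*v))/2) * gp m v u - (1/(2*v)) * ((u-m)^2 * gp m v u) := by
    funext u; rw [gp_log hv]; ring
  rw [h, integral_sub ((gp_integrable hv).const_mul _) ((gp_m2_integrable hv).const_mul _),
    integral_const_mul, integral_const_mul, gp_integral hv, gp_m2_integral hv]
  field_simp

lemma dens_integrable {p : ℝ → ℝ} (hp : IsDensity p) : Integrable p := by
  by_contra h
  have h2 := hp.2
  rw [integral_undef h] at h2
  exact one_ne_zero h2.symm

lemma abs_le_half (u : ℝ) : |u| ≤ (1 + u^2)/2 := by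
  nlinarith [sq_nonneg (|u| - 1), sq_abs u, abs_nonneg u]

lemma dens_m1_integrable {p : ℝ → ℝ} (hp : IsDensity p)
    (h2 : Integrable (fun u => u^2 * p u)) : Integrable (fun u => u * p u) := by
  refine Integrable.mono' (((dens_integrable hp).add h2).div_const 2) ?_
    (Filter.Eventually.of_forall fun u => ?_)
  · exact (aestronglyMeasurable_id.mul (dens_integrable hp).aestronglyMeasurable)
  · simp only [Pi.add_apply, Pi.div_apply]
    rw [Real.norm_eq_abs, abs_mul, abs_of_nonneg (hp.1 u)]
    have h := abs_le_half u
    have := hp.1 u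
    calc |u| * p u ≤ ((1 + u^2)/2) * p u := by nlinarith
    _ = (p u + u^2 * p u)/2 := by ring

lemma dens_shift_integrable {p : ℝ → ℝ} (hp : IsDensity p)
    (h2 : Integrable (fun u => u^2 * p u)) (m : ℝ) :
    Integrable (fun u => (u - m)^2 * p u) := by
  have hA : Integrable (fun u => u^2 * p u - (2*m) * (u * p u) + m^2 * p u) :=
    (h2.sub ((dens_m1_integrable hp h2).const_mul _)).add
      ((dens_integrable hp).const_mul _)
  refine hA.congr (Filter.Eventually.of_forall fun u => ?_); ring

lemma dens_shift_integral {p : ℝ → ℝ} (hp : IsDensity p)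
    (h2 : Integrable (fun u => u^2 * p u)) (m : ℝ) :
    ∫ u, (u - m)^2 * p u
      = (∫ u, u^2 * p u) - 2*m * (∫ u, u * p u) + m^2 := by
  have h1 : Integrable (fun u => u^2 * p u - (2*m) * (u * p u)) :=
    h2.sub ((dens_m1_integrable hp h2).const_mul _)
  have h0 : Integrable (fun u => m^2 * p u) := (dens_integrable hp).const_mul _
  have h : (fun u => (u - m)^2 * p u)
      = fun u => (u^2 * p u - (2*m) * (u * p u)) + m^2 * p u := by funext u; ring
  rw [h, integral_add h1 h0, integral_sub h2 ((dens_m1_integrable hp h2).const_mul _),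
    integral_const_mul, integral_const_mul, hp.2, mul_one]

lemma gibbs {p : ℝ → ℝ} (hp : IsDensity p)
    (h2 : Integrable (fun u => u^2 * p u))
    (hl : Integrable (fun u => p u * Real.log (p u)))
    {m v : ℝ} (hv : 0 < v) :
    -(Real.log (2*π*v))/2 - (1/(2*v)) * ∫ u, (u-m)^2 * p u
      ≤ ∫ u, p u * Real.log (p u) := by
  have hptwise : ∀ u, p u * Real.log (gp m v u) + p u - gp m v u ≤ p u * Real.log (p u) := by
    intro u
    rcases eq_or_lt_of_le (hp.1 u) with h | hpu
    · rw [← h]; simp [le_of_lt (gp_pos (m := m) hv u)]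
    · have hgp := gp_pos (m := m) hv u
      have hlog := Real.log_le_sub_one_of_pos (show 0 < gp m v u / p u by positivity)
      have h3 := mul_le_mul_of_nonneg_right hlog (le_of_lt hpu)
      rw [sub_mul, div_mul_cancel₀ _ (ne_of_gt hpu), one_mul,
        Real.log_div (ne_of_gt hgp) (ne_of_gt hpu), sub_mul] at h3
      linarith
  have hB : Integrable (fun u => (-(Real.log (2*π*v))/2) * p u
      - (1/(2*v)) * ((u-m)^2 * p u)) :=
    ((dens_integrable hp).const_mul _).sub ((dens_shift_integrable hp h2 m).const_mul _)
  have hC : Integrable (fun u => ((-(Real.log (2*π*v))/2) * p u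
      - (1/(2*v)) * ((u-m)^2 * p u)) + p u) := hB.add (dens_integrable hp)
  have hD : Integrable (fun u => (((-(Real.log (2*π*v))/2) * p u
      - (1/(2*v)) * ((u-m)^2 * p u)) + p u) - gp m v u) := hC.sub (gp_integrable hv)
  have hlg : (fun u => p u * Real.log (gp m v u) + p u - gp m v u)
      = fun u => (((-(Real.log (2*π*v))/2) * p u - (1/(2*v)) * ((u-m)^2 * p u))
          + p u) - gp m v u := by
    funext u; rw [gp_log hv]; ring
  have hmono := integral_mono (hlg ▸ hD : Integrable fun u =>
      p u * Real.log (gp m v u) + p u - gp m v u) hl hptwise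
  rw [hlg, integral_sub hC (gp_integrable hv), integral_add hB (dens_integrable hp),
    integral_sub ((dens_integrable hp).const_mul _)
      ((dens_shift_integrable hp h2 m).const_mul _),
    integral_const_mul, integral_const_mul, hp.2, gp_integral hv, mul_one] at hmono
  linarith

lemma gp_isDensity (hv : 0 < v) : IsDensity (gp m v) :=
  ⟨fun u => (gp_pos hv u).le, gp_integral hv⟩

lemma gp_u2_integrable (hv : 0 < v) : Integrable (fun u => u^2 * gp m v u) := by
  have hA : Integrable (fun u => (u-m)^2 * gp m v u + (2*m) * ((u-m) * gp m v u)
      + m^2 * gp m v u) :=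
    ((gp_m2_integrable hv).add ((gp_m1_integrable hv).const_mul _)).add
      ((gp_integrable hv).const_mul _)
  refine hA.congr (Filter.Eventually.of_forall fun u => ?_); ring

lemma gp_u1_integral (hv : 0 < v) : ∫ u, u * gp m v u = m := by
  have h : (fun u => u * gp m v u) = fun u => (u - m) * gp m v u + m * gp m v u := by
    funext u; ring
  rw [h, integral_add (gp_m1_integrable hv) ((gp_integrable hv).const_mul _),
    gp_m1_integral hv, integral_const_mul, gp_integral hv]
  ring

lemma gp_u2_integral (hv : 0 < v) : ∫ u, u^2 * gp m v u = v + m^2 := by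
  have h : (fun u => u^2 * gp m v u) = fun u => ((u - m)^2 * gp m v u
      + (2*m) * ((u - m) * gp m v u)) + m^2 * gp m v u := by
    funext u; ring
  have hA : Integrable (fun u => (u - m)^2 * gp m v u + (2*m) * ((u - m) * gp m v u)) :=
    (gp_m2_integrable hv).add ((gp_m1_integrable hv).const_mul _)
  have hB : Integrable (fun u => m^2 * gp m v u) := (gp_integrable hv).const_mul _
  rw [h, integral_add hA hB,
    integral_add (gp_m2_integrable hv) ((gp_m1_integrable hv).const_mul _),
    gp_m2_integral hv, integral_const_mul, gp_m1_integral hv, integral_const_mul,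
    gp_integral hv]
  ring

lemma stepVal_eval {Ω : Type*} [MeasurableSpace Ω] (μ : Measure Ω) [IsProbabilityMeasure μ]
    (r : Ω → ℝ) (hmeas : Measurable r) {a σ : ℝ} (hσ : 0 < σ)
    (hra : ∫ ω, r ω ∂μ = a) (hrv : ∫ ω, (r ω)^2 ∂μ = a^2 + σ^2)
    (rf lam K C m x : ℝ) {p : ℝ → ℝ} (hp : IsDensity p)
    (h2 : Integrable (fun u => u^2 * p u)) :
    stepVal μ r rf lam (fun y => K*(y-m)^2 + C) x p
      = ((K*(rf*x-m)^2 + C) + (2*K*a*(rf*x-m)) * (∫ u, u * p u)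
        + (K*(a^2+σ^2)) * (∫ u, u^2 * p u)) + lam * ∫ u, p u * Real.log (p u) := by
  have h1 := dens_m1_integrable hp h2
  have h0 := dens_integrable hp
  have hin : ∀ ω : Ω, (∫ u, (K*((rf*x + r ω * u) - m)^2 + C) * p u)
      = (K*(rf*x-m)^2 + C) + (2*K*(rf*x-m)) * (∫ u, u * p u) * r ω
        + (K * (∫ u, u^2 * p u)) * (r ω)^2 := by
    intro ω
    have hfe : (fun u => (K*((rf*x + r ω * u) - m)^2 + C) * p u)
        = fun u => ((K*(rf*x-m)^2 + C) * p u + (2*K*(rf*x-m)* r ω) * (u * p u))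
            + (K * (r ω)^2) * (u^2 * p u) := by
      funext u; ring
    have hA : Integrable (fun u => (K*(rf*x-m)^2 + C) * p u
        + (2*K*(rf*x-m)* r ω) * (u * p u)) := (h0.const_mul _).add (h1.const_mul _)
    have hB : Integrable (fun u => (K * (r ω)^2) * (u^2 * p u)) := h2.const_mul _
    rw [hfe, integral_add hA hB,
      integral_add (h0.const_mul _) (h1.const_mul _),
      integral_const_mul, integral_const_mul, integral_const_mul, hp.2, mul_one]
    ring
  have hr2 : Integrable (fun ω => (r ω)^2) μ := by
    by_contra h
    rw [integral_undef h] at hrv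
    nlinarith [sq_nonneg a, hrv]
  have hr1 : Integrable r μ := by
    refine Integrable.mono' (((integrable_const (1:ℝ)).add hr2).div_const 2)
      hmeas.aestronglyMeasurable (Filter.Eventually.of_forall fun ω => ?_)
    simp only [Pi.add_apply, Pi.div_apply]
    exact (abs_le_half (r ω))
  unfold stepVal
  have hout : (fun ω => ∫ u, (K*((rf*x + r ω * u) - m)^2 + C) * p u)
      = fun ω => ((K*(rf*x-m)^2 + C) + ((2*K*(rf*x-m)) * (∫ u, u * p u)) * r ω)
          + (K * (∫ u, u^2 * p u)) * (r ω)^2 := by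
    funext ω; rw [hin ω]
  have hA : Integrable (fun ω => (K*(rf*x-m)^2 + C)
      + ((2*K*(rf*x-m)) * (∫ u, u * p u)) * r ω) μ :=
    (integrable_const _).add (hr1.const_mul _)
  have hB : Integrable (fun ω => (K * (∫ u, u^2 * p u)) * (r ω)^2) μ := hr2.const_mul _
  rw [show (fun ω => ∫ u, (fun y => K*(y-m)^2 + C) (rf * x + r ω * u) * p u)
      = fun ω => ∫ u, (K*((rf*x + r ω * u) - m)^2 + C) * p u from rfl, hout,
    integral_add hA hB,
    integral_add (integrable_const _) (hr1.const_mul _),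
    integral_const, integral_const_mul, integral_const_mul, hra, hrv]
  simp only [probReal_univ, smul_eq_mul, one_mul]
  ring

set_option maxHeartbeats 1000000 in
lemma key_inf {Ω : Type*} [MeasurableSpace Ω] (μ : Measure Ω) [IsProbabilityMeasure μ]
    (r : Ω → ℝ) (hmeas : Measurable r) {a σ rf lam : ℝ} (hσ : 0 < σ) (hlam : 0 < lam)
    (hrf : 0 < rf) (hra : ∫ ω, r ω ∂μ = a) (hrv : ∫ ω, (r ω)^2 ∂μ = a^2 + σ^2)
    (K C m x : ℝ) (hK : 0 < K) :
    sInf {J : ℝ | ∃ p : ℝ → ℝ, IsDensity p ∧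
        Integrable (fun u => u ^ 2 * p u) ∧
        Integrable (fun u => p u * Real.log (p u)) ∧
        J = stepVal μ r rf lam (fun y => K*(y-m)^2 + C) x p}
      = K*σ^2/(a^2+σ^2)*(rf*x-m)^2 + C
        + lam/2 * Real.log (K*(a^2+σ^2)/(π*lam)) := by
  have haσ : (0:ℝ) < a^2 + σ^2 := by positivity
  set α : ℝ := K*(a^2+σ^2) with hα_def
  have hα : 0 < α := by positivity
  set d : ℝ := rf*x - m with hd_def
  set β : ℝ := 2*K*a*d with hβ_def
  set m₁ : ℝ := -β/(2*α) with hm₁_def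
  set v₀ : ℝ := lam/(2*α) with hv₀_def
  have hv₀ : 0 < v₀ := by positivity
  set Tval : ℝ := (K*d^2 + C) - β^2/(4*α) + lam/2 * Real.log (α/(π*lam)) with hT_def
  have hRHS : K*σ^2/(a^2+σ^2)*(rf*x-m)^2 + C + lam/2 * Real.log (K*(a^2+σ^2)/(π*lam))
      = Tval := by
    rw [hT_def]
    have : K*σ^2/(a^2+σ^2)*d^2 = K*d^2 - β^2/(4*α) := by
      rw [hβ_def, hα_def]; field_simp; ring
    rw [← hd_def, this, ← hα_def]; ring
  have hlog : 2*π*v₀ = π*lam/α := by rw [hv₀_def]; field_simp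
  have hlog2 : Real.log (2*π*v₀) = - Real.log (α/(π*lam)) := by
    rw [hlog, ← Real.log_inv]
    congr 1
    field_simp
  -- the candidate optimal density value
  have hmemval : stepVal μ r rf lam (fun y => K*(y-m)^2 + C) x (gp m₁ v₀) = Tval := by
    rw [stepVal_eval μ r hmeas hσ hra hrv rf lam K C m x (gp_isDensity hv₀)
      (gp_u2_integrable hv₀), gp_u1_integral hv₀, gp_u2_integral hv₀,
      gp_ent_integral hv₀, hlog2, hT_def, ← hd_def, ← hα_def, hm₁_def, hv₀_def]
    field_simp
    ring
  have hmem : Tval ∈ {J : ℝ | ∃ p : ℝ → ℝ, IsDensity p ∧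
      Integrable (fun u => u ^ 2 * p u) ∧
      Integrable (fun u => p u * Real.log (p u)) ∧
      J = stepVal μ r rf lam (fun y => K*(y-m)^2 + C) x p} :=
    ⟨gp m₁ v₀, gp_isDensity hv₀, gp_u2_integrable hv₀, gp_ent_integrable hv₀,
      hmemval.symm⟩
  have hlb : ∀ J ∈ {J : ℝ | ∃ p : ℝ → ℝ, IsDensity p ∧
      Integrable (fun u => u ^ 2 * p u) ∧
      Integrable (fun u => p u * Real.log (p u)) ∧
      J = stepVal μ r rf lam (fun y => K*(y-m)^2 + C) x p}, Tval ≤ J := by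
    rintro J ⟨p, hp, h2, hl, rfl⟩
    rw [stepVal_eval μ r hmeas hσ hra hrv rf lam K C m x hp h2]
    set I₁ : ℝ := ∫ u, u * p u with hI₁
    set I₂ : ℝ := ∫ u, u^2 * p u with hI₂
    set E : ℝ := ∫ u, p u * Real.log (p u) with hE
    have hg := gibbs hp h2 hl (m := m₁) hv₀
    rw [dens_shift_integral hp h2 m₁, ← hI₁, ← hI₂, ← hE] at hg
    set S : ℝ := I₂ - 2*m₁*I₁ + m₁^2 with hS
    have hg' := mul_le_mul_of_nonneg_left hg hlam.le
    have hA : lam * (-(Real.log (2*π*v₀))/2 - (1/(2*v₀)) * S)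
        = lam/2 * Real.log (α/(π*lam)) - α*S := by
      rw [hlog2, hv₀_def]
      field_simp
    have hB : α*S = α*I₂ + β*I₁ + β^2/(4*α) := by
      rw [hS, hm₁_def]
      field_simp
      ring
    rw [hA] at hg'
    rw [hT_def]
    rw [show (K*(a^2+σ^2)) = α by rw [hα_def]]
    rw [show 2*K*a*(rf*x-m) = β by rw [hβ_def, hd_def]]
    rw [show K*(rf*x-m)^2 = K*d^2 by rw [hd_def]]
    linarith [hg', hB]
  exact hRHS ▸ le_antisymm (csInf_le ⟨Tval, hlb⟩ hmem) (le_csInf ⟨Tval, hmem⟩ hlb)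

/-- Optimal value function of the discrete-time exploratory mean-variance problem. -/
theorem stmt5 {Ω : Type*} [MeasurableSpace Ω] (μ : Measure Ω) [IsProbabilityMeasure μ]
    (r : Ω → ℝ) (hmeas : Measurable r)
    (a σ rf lam w b : ℝ) (hσ : 0 < σ) (hlam : 0 < lam) (hrf : 0 < rf)
    (hra : ∫ ω, r ω ∂μ = a) (hrv : ∫ ω, (r ω) ^ 2 ∂μ = a ^ 2 + σ ^ 2)
    (T : ℕ) (hT : 0 < T) (V : ℕ → ℝ → ℝ)
    (hVT : ∀ x, V T x = (x - w) ^ 2 - (w - b) ^ 2)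
    (hrec : ∀ t < T, ∀ x, V t x =
      sInf {J : ℝ | ∃ p : ℝ → ℝ, IsDensity p ∧
        Integrable (fun u => u ^ 2 * p u) ∧
        Integrable (fun u => p u * Real.log (p u)) ∧
        J = stepVal μ r rf lam (V (t + 1)) x p}) :
    ∀ t ≤ T, ∀ x, V t x =
      (σ ^ 2 * rf ^ 2 / (a ^ 2 + σ ^ 2)) ^ (T - t) * (x - (rf⁻¹) ^ (T - t) * w) ^ 2 +
      lam / 2 * ((T : ℝ) - t) * Real.log ((a ^ 2 + σ ^ 2) / (Real.pi * lam)) +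
      lam / 2 * (∑ i ∈ Finset.Icc (t + 1) T,
        ((T : ℝ) - i) * Real.log (σ ^ 2 * rf ^ 2 / (a ^ 2 + σ ^ 2))) -
      (w - b) ^ 2 := by
  have haσ : (0:ℝ) < a^2 + σ^2 := by positivity
  set ρ : ℝ := σ ^ 2 * rf ^ 2 / (a ^ 2 + σ ^ 2) with hρ_def
  have hρ : 0 < ρ := by positivity
  suffices H : ∀ k : ℕ, ∀ t : ℕ, t ≤ T → T - t = k → ∀ x : ℝ, V t x =
      ρ ^ (T - t) * (x - (rf⁻¹) ^ (T - t) * w) ^ 2 +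
      lam / 2 * ((T : ℝ) - t) * Real.log ((a ^ 2 + σ ^ 2) / (Real.pi * lam)) +
      lam / 2 * (∑ i ∈ Finset.Icc (t + 1) T, ((T : ℝ) - i) * Real.log ρ) -
      (w - b) ^ 2 by
    intro t ht x; exact H (T - t) t ht rfl x
  intro k
  induction k with
  | zero =>
    intro t ht hk x
    have htT : t = T := le_antisymm ht (Nat.sub_eq_zero_iff_le.mp hk)
    subst htT
    rw [hVT x, hk]
    rw [Finset.Icc_eq_empty (by omega)]
    simp
  | succ k ih =>
    intro t ht hk x
    have htlt : t < T := by omega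
    have ht1 : t + 1 ≤ T := htlt
    have hn : T - (t+1) = k := by omega
    set n : ℕ := T - (t+1) with hn_def
    have hTt : T - t = n + 1 := by omega
    set K : ℝ := ρ ^ n with hK_def
    set m : ℝ := (rf⁻¹) ^ n * w with hm_def
    set C : ℝ := lam / 2 * ((T : ℝ) - (t+1)) * Real.log ((a ^ 2 + σ ^ 2) / (Real.pi * lam))
      + lam / 2 * (∑ i ∈ Finset.Icc (t + 2) T, ((T : ℝ) - i) * Real.log ρ)
      - (w - b) ^ 2 with hC_def
    have hK : 0 < K := by positivity
    have hVq : V (t+1) = fun y => K * (y - m)^2 + C := by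
      funext y
      rw [ih (t+1) ht1 hn y, hC_def, hK_def, hm_def, hn_def]
      push_cast
      ring
    rw [hrec t htlt x, hVq, key_inf μ r hmeas hσ hlam hrf hra hrv K C m x hK]
    -- now pure arithmetic
    have hsum : (∑ i ∈ Finset.Icc (t + 1) T, ((T : ℝ) - i) * Real.log ρ)
        = ((T : ℝ) - (t+1)) * Real.log ρ
          + ∑ i ∈ Finset.Icc (t + 2) T, ((T : ℝ) - i) * Real.log ρ := by
      have hins : Finset.Icc (t+1) T = insert (t+1) (Finset.Icc (t+2) T) := by
        ext i
        simp only [Finset.mem_Icc, Finset.mem_insert]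
        omega
      rw [hins, Finset.sum_insert (by simp [Finset.mem_Icc])]
      push_cast
      ring
    have hlog : Real.log (K * (a^2+σ^2) / (π * lam))
        = (n : ℝ) * Real.log ρ + Real.log ((a^2+σ^2) / (π * lam)) := by
      rw [hK_def, show ρ^n * (a^2+σ^2) / (π * lam) = ρ^n * ((a^2+σ^2) / (π * lam)) by ring,
        Real.log_mul (by positivity) (by positivity), Real.log_pow]
    have hquad : K * σ^2 / (a^2+σ^2) * (rf * x - m)^2
        = ρ ^ (T - t) * (x - (rf⁻¹) ^ (T - t) * w) ^ 2 := by
      rw [hTt, hK_def, hm_def]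
      have hrfne : rf ≠ 0 := ne_of_gt hrf
      have h1 : rf * x - (rf⁻¹)^n * w = rf * (x - (rf⁻¹)^(n+1) * w) := by
        rw [pow_succ]
        field_simp
      rw [h1, hρ_def]
      rw [mul_pow]
      ring
    rw [hquad, hlog, hsum]
    have hcast : ((T : ℝ) - ((t:ℝ)+1)) = (n : ℝ) := by
      have h : T = t + n + 1 := by omega
      rw [h]; push_cast; ring
    have hcast2 : (T:ℝ) - (t:ℝ) = (n:ℝ) + 1 := by
      have h : T = t + n + 1 := by omega
      rw [h]; push_cast; ring
    rw [hC_def, hcast, hcast2]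
    set S := ∑ i ∈ Finset.Icc (t+2) T, ((T:ℝ) - (i:ℝ)) * Real.log ρ with hS_def
    ring
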